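/- For every integer p ≥ 1 and reals ε ∈ (0,1), B ≥ 1, there is a constant C > 1 with the following property. Let n ∈ Sp(2p;ℝ) be upper unitriangular with respect to ⪯ with |n_{kl}| ≤ B for all k, l, and let a_1,…,a_p be positive reals with a_k ≥ ε·a_{k+1} for 1 ≤ k < p and a_p ≥ √ε. Then: (a) for every 1 ≤ i < p and r > 0 with a_i > C·r and C·a_{i+1} < r, the subgroup V(n·D(a), r) of ℤ^{2p} equals the subgroup generated by the standard basis vectors e_{i+1},…,e_{2p}; and (b) if a_p > C, then V(n·D(a), 1) equals the subgroup generated by e_{p+1},…,e_{2p}. -/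

import Mathlib

open Matrix

/-- Index type for `2p × 2p` matrices: `Sum.inl i` is the index `i+1 ∈ {1,…,p}`,
and `Sum.inr i` is the index `p+i+1 ∈ {p+1,…,2p}`. -/
abbrev Idx (p : ℕ) := Fin p ⊕ Fin p

/-- The standard (1-based) numbering of the indices `{1,…,2p}`. -/
def stdIdx {p : ℕ} : Idx p → ℕ :=
  Sum.elim (fun i => (i : ℕ) + 1) (fun i => p + (i : ℕ) + 1)

/-- The position of an index in the linear order
`1 ≺ 2 ≺ … ≺ p ≺ 2p ≺ 2p−1 ≺ … ≺ p+1`. -/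
def ordIdx {p : ℕ} : Idx p → ℕ :=
  Sum.elim (fun i => (i : ℕ)) (fun i => 2 * p - 1 - (i : ℕ))

/-- The standard symplectic matrix `J = [[0, I], [-I, 0]]`. -/
def Jmat (p : ℕ) : Matrix (Idx p) (Idx p) ℝ := Matrix.fromBlocks 0 1 (-1) 0

/-- The real symplectic group `Sp(2p;ℝ) = {M | MᵀJM = J}`. -/
def SpR (p : ℕ) : Set (Matrix (Idx p) (Idx p) ℝ) :=
  {M | Mᵀ * Jmat p * M = Jmat p}

/-- `n` is upper unitriangular with respect to the order `⪯`:
`n_{kk} = 1` and `n_{kl} = 0` whenever `l ≺ k`. -/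
def IsUpperUnitriangular {p : ℕ} (n : Matrix (Idx p) (Idx p) ℝ) : Prop :=
  (∀ k : Idx p, n k k = 1) ∧
  (∀ k l : Idx p, ordIdx l < ordIdx k → n k l = 0)

/-- `D(a) = diag(a_1,…,a_p,a_1⁻¹,…,a_p⁻¹)`. -/
noncomputable def Dmat {p : ℕ} (a : Fin p → ℝ) : Matrix (Idx p) (Idx p) ℝ :=
  Matrix.diagonal (Sum.elim a fun i => (a i)⁻¹)

/-- The Euclidean norm on `ℝ^{2p}`. -/
noncomputable def _root_.enorm {p : ℕ} (x : Idx p → ℝ) : ℝ :=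
  Real.sqrt (∑ i, x i ^ 2)

/-- `V(M,r)`: the subgroup of `ℤ^{2p}` generated by the integer row vectors `v`
with `‖v·M‖ ≤ r`. -/
noncomputable def Vsub (p : ℕ) (M : Matrix (Idx p) (Idx p) ℝ) (r : ℝ) :
    AddSubgroup (Idx p → ℤ) :=
  AddSubgroup.closure {v | _root_.enorm ((fun i => (v i : ℝ)) ᵥ* M) ≤ r}

/-- The subgroup of `ℤ^{2p}` generated by the standard basis vectors `e_k` with
(1-based) index `k > i`. -/
def basisSubgroupAbove (p : ℕ) (i : ℕ) : AddSubgroup (Idx p → ℤ) :=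
  AddSubgroup.closure {v | ∃ k : Idx p, i < stdIdx k ∧ v = Pi.single k (1 : ℤ)}

section Aux

variable {p : ℕ}

lemma ordIdx_inj {k l : Idx p} (h : ordIdx k = ordIdx l) : k = l := by
  rcases k with k | k <;> rcases l with l | l <;>
    simp only [ordIdx, Sum.elim_inl, Sum.elim_inr] at h
  · exact congrArg Sum.inl (Fin.ext h)
  · exact absurd h (by have := k.isLt; have := l.isLt; omega)
  · exact absurd h (by have := k.isLt; have := l.isLt; omega)
  · exact congrArg Sum.inr (Fin.ext (by have := k.isLt; have := l.isLt; omega))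

lemma abs_le_enorm (x : Idx p → ℝ) (k : Idx p) : |x k| ≤ _root_.enorm x := by
  rw [_root_.enorm, ← Real.sqrt_sq_eq_abs]
  exact Real.sqrt_le_sqrt (Finset.single_le_sum (fun i _ => sq_nonneg (x i)) (Finset.mem_univ k))

lemma enorm_le_sum (x : Idx p → ℝ) : _root_.enorm x ≤ ∑ i, |x i| := by
  rw [_root_.enorm]
  have h1 : ∑ i, x i ^ 2 ≤ (∑ i, |x i|) ^ 2 := by
    rw [sq, Finset.sum_mul]
    refine Finset.sum_le_sum fun i _ => ?_
    rw [← sq_abs, sq]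
    exact mul_le_mul_of_nonneg_left
      (Finset.single_le_sum (fun j _ => abs_nonneg (x j)) (Finset.mem_univ i)) (abs_nonneg _)
  calc Real.sqrt (∑ i, x i ^ 2) ≤ Real.sqrt ((∑ i, |x i|) ^ 2) := Real.sqrt_le_sqrt h1
    _ = ∑ i, |x i| := Real.sqrt_sq (Finset.sum_nonneg fun i _ => abs_nonneg _)

lemma enorm_le_of_bound (x : Idx p → ℝ) (c : ℝ) (h : ∀ l, |x l| ≤ c) :
    _root_.enorm x ≤ (2 * (p : ℝ)) * c := by
  calc _root_.enorm x ≤ ∑ i, |x i| := enorm_le_sum x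
    _ ≤ ∑ _i : Idx p, c := Finset.sum_le_sum fun i _ => h i
    _ = (2 * (p : ℝ)) * c := by
        rw [Finset.sum_const, Finset.card_univ]
        simp [Fintype.card_sum, two_mul, add_mul]

lemma mem_basisAbove {i : ℕ} (v : Idx p → ℤ) (h : ∀ k, stdIdx k ≤ i → v k = 0) :
    v ∈ basisSubgroupAbove p i := by
  have hv : v = ∑ k : Idx p, Pi.single k (v k) := (Finset.univ_sum_single v).symm
  rw [hv]
  refine AddSubgroup.sum_mem _ fun k _ => ?_
  by_cases hk : stdIdx k ≤ i
  · rw [h k hk, Pi.single_zero]; exact zero_mem _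
  · have heq : Pi.single k (v k) = v k • (Pi.single k (1 : ℤ) : Idx p → ℤ) := by
      ext l; by_cases hl : l = k <;> simp [Pi.single_apply, hl]
    rw [heq]
    have hgen : (Pi.single k (1:ℤ) : Idx p → ℤ) ∈
        {v : Idx p → ℤ | ∃ k' : Idx p, i < stdIdx k' ∧ v = Pi.single k' (1:ℤ)} :=
      ⟨k, Nat.lt_of_not_le hk, rfl⟩
    exact zsmul_mem (AddSubgroup.subset_closure hgen) _

lemma single_vecMul' (M : Matrix (Idx p) (Idx p) ℝ) (k l : Idx p) :
    ((Pi.single k (1:ℝ)) ᵥ* M) l = M k l := by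
  simp [Matrix.vecMul, dotProduct, Pi.single_apply]

lemma vecMul_entry_min (n : Matrix (Idx p) (Idx p) ℝ) (hn : IsUpperUnitriangular n)
    (v : Idx p → ℤ) (k0 : Idx p) (hmin : ∀ k, ordIdx k < ordIdx k0 → v k = 0) :
    ((fun i => (v i : ℝ)) ᵥ* n) k0 = (v k0 : ℝ) := by
  show ∑ k, (v k : ℝ) * n k k0 = (v k0 : ℝ)
  rw [Finset.sum_eq_single k0]
  · rw [hn.1 k0, mul_one]
  · intro k _ hk
    rcases lt_trichotomy (ordIdx k) (ordIdx k0) with h | h | h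
    · rw [hmin k h]; simp
    · exact absurd (ordIdx_inj h) hk
    · rw [hn.2 k k0 h, mul_zero]
  · simp

lemma vanish_lemma (n : Matrix (Idx p) (Idx p) ℝ) (hn : IsUpperUnitriangular n)
    (d : Idx p → ℝ) (hd : ∀ k, 0 < d k) (v : Idx p → ℤ) (r : ℝ)
    (hnorm : _root_.enorm ((fun i => (v i : ℝ)) ᵥ* (n * Matrix.diagonal d)) ≤ r)
    (i : ℕ) (hip : i ≤ p) (hbig : ∀ k, stdIdx k ≤ i → r < d k) :
    ∀ k, stdIdx k ≤ i → v k = 0 := by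
  by_contra hcon
  push_neg at hcon
  obtain ⟨k1, hk1i, hk1⟩ := hcon
  obtain ⟨k0, hk0T, hk0min⟩ := Finset.exists_min_image
    (Finset.univ.filter fun k => v k ≠ 0) ordIdx ⟨k1, by simp [hk1]⟩
  simp only [Finset.mem_filter, Finset.mem_univ, true_and] at hk0T
  have hmin : ∀ k, ordIdx k < ordIdx k0 → v k = 0 := by
    intro k hk
    by_contra h
    exact absurd (hk0min k (by simp [h])) (not_le.mpr hk)
  have hx : ((fun i => (v i : ℝ)) ᵥ* (n * Matrix.diagonal d)) k0 = (v k0 : ℝ) * d k0 := by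
    rw [← Matrix.vecMul_vecMul, Matrix.vecMul_diagonal, vecMul_entry_min n hn v k0 hmin]
  have h1 : d k0 ≤ |(v k0 : ℝ) * d k0| := by
    rw [abs_mul, abs_of_pos (hd k0)]
    nlinarith [hd k0, (by exact_mod_cast Int.one_le_abs hk0T : (1:ℝ) ≤ |(v k0 : ℝ)|)]
  have h2 : d k0 ≤ r := le_trans h1 (le_trans (hx ▸ abs_le_enorm _ k0) hnorm)
  have hstd : stdIdx k0 ≤ i := by
    have hord : ordIdx k0 ≤ ordIdx k1 := hk0min k1 (by simp [hk1])
    rcases k1 with j1 | j1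
    · rcases k0 with j0 | j0
      · simp only [stdIdx, ordIdx, Sum.elim_inl] at *
        omega
      · simp only [ordIdx, Sum.elim_inl, Sum.elim_inr] at hord
        have := j0.isLt; have := j1.isLt
        simp only [stdIdx, Sum.elim_inl] at hk1i
        omega
    · simp only [stdIdx, Sum.elim_inr] at hk1i
      have := j1.isLt; omega
  exact absurd h2 (not_le.mpr (hbig k0 hstd))

lemma main_eq (n : Matrix (Idx p) (Idx p) ℝ) (hn : IsUpperUnitriangular n)
    (d : Idx p → ℝ) (hd : ∀ k, 0 < d k) (i : ℕ) (hip : i ≤ p) (r : ℝ)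
    (H1 : ∀ k, stdIdx k ≤ i → r < d k)
    (H2 : ∀ k : Idx p, i < stdIdx k →
      _root_.enorm ((Pi.single k (1:ℝ)) ᵥ* (n * Matrix.diagonal d)) ≤ r) :
    Vsub p (n * Matrix.diagonal d) r = basisSubgroupAbove p i := by
  apply le_antisymm
  · rw [Vsub]
    refine (AddSubgroup.closure_le _).mpr ?_
    intro v hv
    exact mem_basisAbove v (vanish_lemma n hn d hd v r hv i hip H1)
  · rw [basisSubgroupAbove]
    refine (AddSubgroup.closure_le _).mpr ?_
    rintro v ⟨k, hk, rfl⟩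
    apply AddSubgroup.subset_closure
    show _root_.enorm ((fun l => ((Pi.single k (1:ℤ) : Idx p → ℤ) l : ℝ)) ᵥ* _) ≤ r
    have hcast : (fun l => ((Pi.single k (1:ℤ) : Idx p → ℤ) l : ℝ))
        = (Pi.single k (1:ℝ) : Idx p → ℝ) := by
      ext l; by_cases hl : l = k <;> simp [Pi.single_apply, hl]
    rw [hcast]; exact H2 k hk

end Aux

/-- for `p ≥ 1`, `ε ∈ (0,1)` and `B ≥ 1` there is `C > 1` such that for
any upper unitriangular `n ∈ Sp(2p;ℝ)` with entries bounded by `B` and any positive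
`a_1,…,a_p` with `a_k ≥ ε·a_{k+1}` and `a_p ≥ √ε`: (a) if `1 ≤ i < p`, `r > 0`,
`a_i > C·r` and `C·a_{i+1} < r`, then `V(n·D(a), r) = ⟨e_{i+1},…,e_{2p}⟩`; and
(b) if `a_p > C` then `V(n·D(a), 1) = ⟨e_{p+1},…,e_{2p}⟩`. -/
theorem V_of_siegel_point (p : ℕ) (hp : 1 ≤ p) (ε B : ℝ)
    (hε0 : 0 < ε) (hε1 : ε < 1) (hB : 1 ≤ B) :
    ∃ C : ℝ, 1 < C ∧
      ∀ (n : Matrix (Idx p) (Idx p) ℝ) (a : Fin p → ℝ),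
        n ∈ SpR p → IsUpperUnitriangular n → (∀ k l, |n k l| ≤ B) →
        (∀ i, 0 < a i) →
        (∀ (k : ℕ) (hk : k + 1 < p),
          a ⟨k, Nat.lt_of_succ_lt hk⟩ ≥ ε * a ⟨k + 1, hk⟩) →
        a ⟨p - 1, Nat.sub_lt hp Nat.one_pos⟩ ≥ Real.sqrt ε →
        ((∀ (i : ℕ) (hi1 : 1 ≤ i) (hi2 : i < p) (r : ℝ), 0 < r →
            a ⟨i - 1, lt_of_le_of_lt (Nat.sub_le i 1) hi2⟩ > C * r →
            C * a ⟨i, hi2⟩ < r →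
            Vsub p (n * Dmat a) r = basisSubgroupAbove p i) ∧
          (a ⟨p - 1, Nat.sub_lt hp Nat.one_pos⟩ > C →
            Vsub p (n * Dmat a) 1 = basisSubgroupAbove p p)) := by
  have hp1 : (1:ℝ) ≤ (p:ℝ) := by exact_mod_cast hp
  obtain ⟨P, hPdef⟩ : ∃ P : ℝ, P = ε ^ p := ⟨_, rfl⟩
  have hP : 0 < P := by rw [hPdef]; exact pow_pos hε0 p
  have hP1 : P ≤ 1 := by rw [hPdef]; exact pow_le_one₀ hε0.le hε1.le
  obtain ⟨C, hCdef⟩ : ∃ C : ℝ, C = (2*(p:ℝ)+2) * B * (P*P)⁻¹ := ⟨_, rfl⟩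
  have h2p2 : (0:ℝ) < 2*(p:ℝ)+2 := by linarith
  have hPPinv : 1 ≤ (P*P)⁻¹ := (one_le_inv₀ (by positivity)).mpr (by nlinarith)
  have hCPP : C * P * P = (2*(p:ℝ)+2) * B := by
    rw [hCdef]; field_simp
  have hC1 : 1 < C := by
    rw [hCdef]; nlinarith
  have hCpos : 0 < C := lt_trans one_pos hC1
  have hPC1 : 1 ≤ P * C := by
    nlinarith [mul_pos hP hCpos]
  refine ⟨C, hC1, ?_⟩
  intro n a _hSp hUT hBd ha hchain hsqrt
  obtain ⟨d, hddef⟩ : ∃ d : Idx p → ℝ, d = Sum.elim a (fun i => (a i)⁻¹) := ⟨_, rfl⟩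
  have hd : ∀ k, 0 < d k := by
    rw [hddef]; rintro (j | j)
    · exact ha j
    · exact inv_pos.mpr (ha j)
  have hdinl : ∀ j : Fin p, d (Sum.inl j) = a j := by rw [hddef]; intro j; rfl
  have hdinr : ∀ j : Fin p, d (Sum.inr j) = (a j)⁻¹ := by rw [hddef]; intro j; rfl
  have hMD : n * Dmat a = n * Matrix.diagonal d := by rw [hddef]; rfl
  -- the chain inequality
  have key : ∀ (t j : ℕ) (h : j + t < p), ε ^ t * a ⟨j + t, h⟩ ≤ a ⟨j, by omega⟩ := by
    intro t
    induction t with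
    | zero => intro j h; simp
    | succ t ih =>
      intro j h
      have h1 : j + t < p := by omega
      have h2 := hchain (j + t) (by omega)
      have h3 := ih j h1
      have hεt : (0:ℝ) ≤ ε ^ t := (pow_pos hε0 t).le
      calc ε ^ (t+1) * a ⟨j + (t+1), h⟩ = ε ^ t * (ε * a ⟨j + (t+1), h⟩) := by
            rw [pow_succ]; ring
        _ ≤ ε ^ t * a ⟨j + t, h1⟩ := mul_le_mul_of_nonneg_left h2 hεt
        _ ≤ a ⟨j, by omega⟩ := h3
  have keyle : ∀ (j m : ℕ) (hj : j ≤ m) (hm : m < p) (hjp : j < p),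
      ε ^ (m - j) * a ⟨m, hm⟩ ≤ a ⟨j, hjp⟩ := by
    intro j m hj hm hjp
    have h' := key (m - j) j (by omega)
    have e : (⟨j + (m - j), by omega⟩ : Fin p) = ⟨m, hm⟩ := Fin.ext (by simp; omega)
    rwa [e] at h'
  have lowA : ∀ (j : ℕ) (hj : j < p), P ≤ a ⟨j, hj⟩ := by
    intro j hj
    have k1 := keyle j (p-1) (by omega) (by omega) hj
    have hse : ε ≤ Real.sqrt ε := by
      nth_rewrite 1 [← Real.sqrt_sq hε0.le]
      exact Real.sqrt_le_sqrt (by nlinarith)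
    have h3 : ε ≤ a ⟨p-1, by omega⟩ := le_trans hse hsqrt
    have k2 : ε ^ p ≤ ε ^ ((p-1-j)+1) := pow_le_pow_of_le_one hε0.le hε1.le (by omega)
    rw [pow_succ] at k2
    have hεe : (0:ℝ) < ε ^ (p-1-j) := pow_pos hε0 _
    rw [hPdef]
    linarith [mul_le_mul_of_nonneg_left h3 hεe.le, k1, k2]
  have upA : ∀ (j m : ℕ) (hj : j ≤ m) (hm : m < p) (hjp : j < p),
      a ⟨m, hm⟩ * P ≤ a ⟨j, hjp⟩ := by
    intro j m hj hm hjp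
    have k1 := keyle j m hj hm hjp
    have k2 : P ≤ ε ^ (m - j) := by
      rw [hPdef]; exact pow_le_pow_of_le_one hε0.le hε1.le (by omega)
    nlinarith [ha ⟨m, hm⟩, k1, k2, mul_le_mul_of_nonneg_left k2 (ha ⟨m, hm⟩).le]
  -- entries of rows of n * D
  have hentry : ∀ k : Idx p,
      (Pi.single k (1:ℝ) : Idx p → ℝ) ᵥ* (n * Matrix.diagonal d) = fun l => n k l * d l := by
    intro k; funext l
    rw [← Matrix.vecMul_vecMul, Matrix.vecMul_diagonal, single_vecMul']
  have hnormle : ∀ (k : Idx p) (r : ℝ), 0 ≤ r →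
      (∀ l, |n k l| * d l ≤ r / (2*(p:ℝ)+2)) →
      _root_.enorm ((Pi.single k (1:ℝ) : Idx p → ℝ) ᵥ* (n * Matrix.diagonal d)) ≤ r := by
    intro k r hr hb
    rw [hentry k]
    have h0 := enorm_le_of_bound (fun l => n k l * d l) (r / (2*(p:ℝ)+2)) (fun l => by
      rw [abs_mul, abs_of_pos (hd l)]; exact hb l)
    refine le_trans h0 ?_
    have hfrac : (2*(p:ℝ))/(2*(p:ℝ)+2) ≤ 1 := (div_le_one h2p2).mpr (by linarith)
    calc (2*(p:ℝ)) * (r/(2*(p:ℝ)+2)) = r * ((2*(p:ℝ))/(2*(p:ℝ)+2)) := by ring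
      _ ≤ r * 1 := mul_le_mul_of_nonneg_left hfrac hr
      _ = r := mul_one r
  constructor
  · -- part (a)
    intro i hi1 hi2 r hr hai1 hai2
    rw [hMD]
    refine main_eq n hUT d hd i (le_of_lt hi2) r ?_ ?_
    · -- H1
      rintro (j | j) hk
      · simp only [stdIdx, Sum.elim_inl] at hk
        have k1 := keyle (j:ℕ) (i-1) (by omega) (by omega) j.isLt
        have k2 : P ≤ ε ^ ((i-1) - (j:ℕ)) := by
          rw [hPdef]; exact pow_le_pow_of_le_one hε0.le hε1.le (by omega)
        have hpos : (0:ℝ) < a ⟨i-1, by omega⟩ := ha _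
        have m1 : P * a ⟨i-1, by omega⟩ ≤ ε ^ ((i-1)-(j:ℕ)) * a ⟨i-1, by omega⟩ :=
          mul_le_mul_of_nonneg_right k2 hpos.le
        have m2 : P * (C * r) < P * a ⟨i-1, lt_of_le_of_lt (Nat.sub_le i 1) hi2⟩ :=
          mul_lt_mul_of_pos_left hai1 hP
        have m3 : 1 * r ≤ (P * C) * r := mul_le_mul_of_nonneg_right hPC1 hr.le
        rw [hdinl]
        have hje : a ⟨(j:ℕ), j.isLt⟩ = a j := by congr
        rw [hje] at k1
        linarith [k1, m1, m2, m3]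
      · simp only [stdIdx, Sum.elim_inr] at hk
        exact absurd hk (by omega)
    · -- H2
      intro k hk
      refine hnormle k r hr.le ?_
      intro l
      rw [le_div_iff₀ h2p2]
      rcases l with m | m
      · rcases k with j | j
        · simp only [stdIdx, Sum.elim_inl] at hk
          by_cases hmj : ordIdx (Sum.inl m : Idx p) < ordIdx (Sum.inl j : Idx p)
          · rw [hUT.2 _ _ hmj]
            simp only [abs_zero, zero_mul]
            positivity
          · simp only [ordIdx, Sum.elim_inl, not_lt] at hmj
            have hup := upA i (m:ℕ) (by omega) m.isLt hi2
            have hme : a ⟨(m:ℕ), m.isLt⟩ = a m := by congr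
            rw [hme] at hup
            have hb := hBd (Sum.inl j) (Sum.inl m)
            have ham : 0 < a m := ha m
            rw [hdinl]
            have c1 : |n (Sum.inl j) (Sum.inl m)| * a m * (2*(p:ℝ)+2)
                ≤ B * a m * (2*(p:ℝ)+2) :=
              mul_le_mul_of_nonneg_right (mul_le_mul_of_nonneg_right hb ham.le) h2p2.le
            have c2 : B * a m * (2*(p:ℝ)+2) = C * P * (P * a m) := by
              linear_combination (-(a m)) * hCPP
            have c3 : C * P * (P * a m) ≤ C * P * a ⟨i, hi2⟩ := by
              have := mul_le_mul_of_nonneg_left hup (by positivity : (0:ℝ) ≤ C * P)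
              calc C * P * (P * a m) = C * P * (a m * P) := by ring
                _ ≤ C * P * a ⟨i, hi2⟩ := this
            have c4 : C * P * a ⟨i, hi2⟩ ≤ C * a ⟨i, hi2⟩ := by
              have h5 := mul_le_mul_of_nonneg_right
                (mul_le_mul_of_nonneg_left hP1 hCpos.le) (ha ⟨i, hi2⟩).le
              linarith [h5]
            linarith [c1, c2.le, c3, c4, hai2]
        · rw [hUT.2 _ _ (by
            simp only [ordIdx, Sum.elim_inl, Sum.elim_inr]
            have := j.isLt; have := m.isLt; omega)]
          simp only [abs_zero, zero_mul]
          positivity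
      · -- l = inr m
        rw [hdinr]
        have hme : a ⟨(m:ℕ), m.isLt⟩ = a m := by congr
        have hlow : P ≤ a m := by rw [← hme]; exact lowA (m:ℕ) m.isLt
        have hinv : (a m)⁻¹ ≤ P⁻¹ := by
          apply inv_anti₀ hP hlow
        have c1 : |n k (Sum.inr m)| * (a m)⁻¹ * (2*(p:ℝ)+2) ≤ B * P⁻¹ * (2*(p:ℝ)+2) := by
          refine mul_le_mul_of_nonneg_right ?_ h2p2.le
          exact mul_le_mul (hBd _ _) hinv (inv_pos.mpr (ha m)).le (le_trans zero_le_one hB)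
        have c2 : B * P⁻¹ * (2*(p:ℝ)+2) = C * P := by
          rw [hCdef]; field_simp
        have c3 : C * P ≤ C * a ⟨i, hi2⟩ :=
          mul_le_mul_of_nonneg_left (lowA i hi2) hCpos.le
        linarith [c1, c2.le, c3, hai2]
  · -- part (b)
    intro hb
    rw [hMD]
    refine main_eq n hUT d hd p le_rfl 1 ?_ ?_
    · rintro (j | j) hk
      · have k1 := keyle (j:ℕ) (p-1) (by omega) (by omega) j.isLt
        have k2 : P ≤ ε ^ ((p-1) - (j:ℕ)) := by
          rw [hPdef]; exact pow_le_pow_of_le_one hε0.le hε1.le (by omega)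
        have hpos : (0:ℝ) < a ⟨p-1, by omega⟩ := ha _
        have m1 : P * a ⟨p-1, by omega⟩ ≤ ε ^ ((p-1)-(j:ℕ)) * a ⟨p-1, by omega⟩ :=
          mul_le_mul_of_nonneg_right k2 hpos.le
        have m2 : P * C < P * a ⟨p-1, Nat.sub_lt hp Nat.one_pos⟩ :=
          mul_lt_mul_of_pos_left hb hP
        rw [hdinl]
        have hje : a ⟨(j:ℕ), j.isLt⟩ = a j := by congr
        rw [hje] at k1
        linarith [k1, m1, m2, hPC1]
      · simp only [stdIdx, Sum.elim_inr] at hk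
        exact absurd hk (by have := j.isLt; omega)
    · intro k hk
      refine hnormle k 1 zero_le_one ?_
      intro l
      rw [le_div_iff₀ h2p2]
      rcases k with j | j
      · simp only [stdIdx, Sum.elim_inl] at hk
        exact absurd hk (by have := j.isLt; omega)
      · rcases l with m | m
        · rw [hUT.2 _ _ (by
            simp only [ordIdx, Sum.elim_inl, Sum.elim_inr]
            have := j.isLt; have := m.isLt; omega)]
          simp only [abs_zero, zero_mul]
          positivity
        · rw [hdinr]
          have k1 := keyle (m:ℕ) (p-1) (by omega) (by omega) m.isLt
          have k2 : P ≤ ε ^ ((p-1) - (m:ℕ)) := by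
            rw [hPdef]; exact pow_le_pow_of_le_one hε0.le hε1.le (by omega)
          have hpos : (0:ℝ) < a ⟨p-1, by omega⟩ := ha _
          have m1 : P * a ⟨p-1, by omega⟩ ≤ ε ^ ((p-1)-(m:ℕ)) * a ⟨p-1, by omega⟩ :=
            mul_le_mul_of_nonneg_right k2 hpos.le
          have m2 : P * C < P * a ⟨p-1, Nat.sub_lt hp Nat.one_pos⟩ :=
            mul_lt_mul_of_pos_left hb hP
          have hme : a ⟨(m:ℕ), m.isLt⟩ = a m := by congr
          rw [hme] at k1
          have ham : P * C < a m := by linarith [k1, m1, m2]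
          have hPCpos : (0:ℝ) < P * C := mul_pos hP hCpos
          have hinv : (a m)⁻¹ ≤ (P * C)⁻¹ := inv_anti₀ hPCpos ham.le
          have c1 : |n (Sum.inr j) (Sum.inr m)| * (a m)⁻¹ * (2*(p:ℝ)+2)
              ≤ B * (P * C)⁻¹ * (2*(p:ℝ)+2) := by
            refine mul_le_mul_of_nonneg_right ?_ h2p2.le
            exact mul_le_mul (hBd _ _) hinv (inv_pos.mpr (ha m)).le (le_trans zero_le_one hB)
          have c2 : B * (P * C)⁻¹ * (2*(p:ℝ)+2) = P := by
            have hB0 : B ≠ 0 := by positivity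
            rw [hCdef]
            rw [mul_inv, mul_inv, mul_inv, inv_inv]
            field_simp
          linarith [c1, c2.le, hP1]
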